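/- Under the congestion game payoff structure with each w_r nonincreasing, the set of mixed stationary Nash equilibria (MSNE) is compact and convex. Furthermore, if each w_r is strictly decreasing, then for any two MSNE μ and μ̃ one has σ_r(μ) = σ_r(μ̃) for every resource r ∈ R, where σ_r(μ) = λ·Σ_{c∈C} Σ_{s∈S^c} Σ_{u∈U^c : r∈u(s)} μ^c[s,u]. -/
import Mathlib


open Finset

variable {C : Type*} {S U : C → Type*} {R : Type*}

/-- Membership in the state-policy distribution space `X`. -/
def MemX [∀ c, Fintype (S c)] [∀ c, Fintype (U c)]
    (m : C → ℝ) (μ : (c : C) → S c → U c → ℝ) : Prop :=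
  ∀ c, (∀ s u, 0 ≤ μ c s u) ∧ (∑ s, ∑ u, μ c s u) = m c

/-- Mixed stationary Nash equilibrium: every policy with positive mass is payoff maximizing,
and the state distribution of each policy is the stationary one. -/
def IsMSNE [∀ c, Fintype (S c)]
    (F : (c : C) → ((c' : C) → S c' → U c' → ℝ) → U c → ℝ)
    (η : (c : C) → U c → S c → ℝ)
    (μ : (c : C) → S c → U c → ℝ) : Prop :=
  ∀ (c : C) (u : U c),
    ((0 < ∑ s, μ c s u) → ∀ v, F c μ v ≤ F c μ u) ∧
    (∀ s, μ c s u = η c u s * ∑ s', μ c s' u)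

/-- Flow on resource `r` induced by the state-policy distribution `μ`. -/
def sigmaMu [Fintype C] [∀ c, Fintype (S c)] [∀ c, Fintype (U c)] [Fintype R] [DecidableEq R]
    (lam : ℝ) (use : (c : C) → U c → S c → Finset R)
    (μ : (c : C) → S c → U c → ℝ) (r : R) : ℝ :=
  lam * ∑ c, ∑ s, ∑ u, if r ∈ use c u s then μ c s u else 0

/-- Congestion payoff map `F^c_u(μ)`. -/
noncomputable def Fcong [Fintype C] [∀ c, Fintype (S c)] [∀ c, Fintype (U c)]
    [Fintype R] [DecidableEq R]
    (lam : ℝ) (use : (c : C) → U c → S c → Finset R) (η : (c : C) → U c → S c → ℝ)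
    (w : R → ℝ → ℝ) (μ : (c : C) → S c → U c → ℝ) (c : C) (u : U c) : ℝ :=
  ∑ s, η c u s * ∑ r ∈ use c u s, w r (sigmaMu lam use μ r)

noncomputable def Acoef [∀ c, Fintype (S c)] [DecidableEq R]
    (η : (c : C) → U c → S c → ℝ) (use : (c : C) → U c → S c → Finset R)
    (c : C) (u : U c) (r : R) : ℝ :=
  ∑ s, if r ∈ use c u s then η c u s else 0

lemma F_eq [Fintype C] [∀ c, Fintype (S c)] [∀ c, Fintype (U c)] [Fintype R] [DecidableEq R]
    (lam : ℝ) (use : (c : C) → U c → S c → Finset R) (η : (c : C) → U c → S c → ℝ)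
    (w : R → ℝ → ℝ) (μ : (c : C) → S c → U c → ℝ) (c : C) (u : U c) :
    Fcong lam use η w μ c u = ∑ r, Acoef η use c u r * w r (sigmaMu lam use μ r) := by
  unfold Fcong Acoef
  have : ∀ s : S c, η c u s * ∑ r ∈ use c u s, w r (sigmaMu lam use μ r)
      = ∑ r : R, (if r ∈ use c u s then η c u s * w r (sigmaMu lam use μ r) else 0) := by
    intro s
    rw [← Finset.univ_inter (use c u s), ← Finset.sum_ite_mem, Finset.mul_sum, Finset.univ_inter]
    exact Finset.sum_congr rfl fun r _ => by rw [mul_ite, mul_zero]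
  simp only [this]
  rw [Finset.sum_comm]
  refine Finset.sum_congr rfl fun r _ => ?_
  rw [Finset.sum_mul]
  exact Finset.sum_congr rfl fun s _ => by rw [ite_mul, zero_mul]

lemma sigma_eq [Fintype C] [∀ c, Fintype (S c)] [∀ c, Fintype (U c)] [Fintype R] [DecidableEq R]
    (lam : ℝ) (use : (c : C) → U c → S c → Finset R) (η : (c : C) → U c → S c → ℝ)
    (μ : (c : C) → S c → U c → ℝ)
    (hstat : ∀ c (u : U c) s, μ c s u = η c u s * ∑ s', μ c s' u) (r : R) :
    sigmaMu lam use μ r = lam * ∑ c, ∑ u, Acoef η use c u r * ∑ s, μ c s u := by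
  unfold sigmaMu Acoef
  congr 1
  refine Finset.sum_congr rfl fun c _ => ?_
  rw [Finset.sum_comm]
  refine Finset.sum_congr rfl fun u _ => ?_
  rw [Finset.sum_mul]
  refine Finset.sum_congr rfl fun s _ => ?_
  rw [ite_mul, zero_mul, hstat c u s]

lemma sigma_lin [Fintype C] [∀ c, Fintype (S c)] [∀ c, Fintype (U c)] [Fintype R] [DecidableEq R]
    (lam : ℝ) (use : (c : C) → U c → S c → Finset R)
    (μ μ' : (c : C) → S c → U c → ℝ) (a b : ℝ) (r : R) :
    sigmaMu lam use (fun c s u => a * μ c s u + b * μ' c s u) r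
      = a * sigmaMu lam use μ r + b * sigmaMu lam use μ' r := by
  unfold sigmaMu
  simp only [Finset.mul_sum, ← Finset.sum_add_distrib]
  refine Finset.sum_congr rfl fun c _ => Finset.sum_congr rfl fun s _ =>
    Finset.sum_congr rfl fun u _ => ?_
  split_ifs <;> ring

lemma sigma_cont [Fintype C] [∀ c, Fintype (S c)] [∀ c, Fintype (U c)] [Fintype R] [DecidableEq R]
    (lam : ℝ) (use : (c : C) → U c → S c → Finset R) (r : R) :
    Continuous fun μ : (c : C) → S c → U c → ℝ => sigmaMu lam use μ r := by
  unfold sigmaMu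
  refine continuous_const.mul ?_
  refine continuous_finset_sum _ fun c _ => continuous_finset_sum _ fun s _ =>
    continuous_finset_sum _ fun u _ => ?_
  split_ifs
  · exact (continuous_apply u).comp ((continuous_apply s).comp (continuous_apply c))
  · exact continuous_const

lemma F_cont [Fintype C] [∀ c, Fintype (S c)] [∀ c, Fintype (U c)] [Fintype R] [DecidableEq R]
    (lam : ℝ) (use : (c : C) → U c → S c → Finset R) (η : (c : C) → U c → S c → ℝ)
    (w : R → ℝ → ℝ) (hw : ∀ r, Continuous (w r)) (c : C) (u : U c) :
    Continuous fun μ : (c : C) → S c → U c → ℝ => Fcong lam use η w μ c u := by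
  unfold Fcong
  exact continuous_finset_sum _ fun s _ => continuous_const.mul
    (continuous_finset_sum _ fun r _ => (hw r).comp (sigma_cont lam use r))


lemma var_ineq [∀ c, Fintype (S c)] [∀ c, Fintype (U c)] [∀ c, Nonempty (U c)]
    (m : C → ℝ)
    (F : (c : C) → ((c' : C) → S c' → U c' → ℝ) → U c → ℝ)
    (η : (c : C) → U c → S c → ℝ)
    (ν μ : (c : C) → S c → U c → ℝ)
    (hXν : MemX m ν) (hNν : IsMSNE F η ν) (hXμ : MemX m μ) (c : C) :
    ∑ u, (∑ s, μ c s u) * F c ν u ≤ ∑ u, (∑ s, ν c s u) * F c ν u := by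
  obtain ⟨u₀, -, hu₀⟩ := Finset.exists_max_image (univ : Finset (U c)) (F c ν) univ_nonempty
  set V := F c ν u₀ with hV
  have hμ0 : ∀ u, 0 ≤ ∑ s, μ c s u := fun u =>
    Finset.sum_nonneg fun s _ => (hXμ c).1 s u
  have hν0 : ∀ u, 0 ≤ ∑ s, ν c s u := fun u =>
    Finset.sum_nonneg fun s _ => (hXν c).1 s u
  have hsumμ : ∑ u, ∑ s, μ c s u = m c := by rw [Finset.sum_comm]; exact (hXμ c).2
  have hsumν : ∑ u, ∑ s, ν c s u = m c := by rw [Finset.sum_comm]; exact (hXν c).2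
  calc ∑ u, (∑ s, μ c s u) * F c ν u
      ≤ ∑ u, (∑ s, μ c s u) * V :=
        Finset.sum_le_sum fun u _ => mul_le_mul_of_nonneg_left (hu₀ u (mem_univ u)) (hμ0 u)
    _ = m c * V := by rw [← Finset.sum_mul, hsumμ]
    _ = ∑ u, (∑ s, ν c s u) * V := by rw [← Finset.sum_mul, hsumν]
    _ = ∑ u, (∑ s, ν c s u) * F c ν u := by
        refine Finset.sum_congr rfl fun u _ => ?_
        rcases eq_or_lt_of_le (hν0 u) with h | h
        · rw [← h, zero_mul, zero_mul]
        · have h1 := (hNν c u).1 h u₀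
          have h2 := hu₀ u (mem_univ u)
          rw [le_antisymm h2 h1]

lemma key_zero [Fintype C] [∀ c, Fintype (S c)] [∀ c, Fintype (U c)] [∀ c, Nonempty (U c)]
    [Fintype R] [DecidableEq R]
    (m : C → ℝ) (lam : ℝ) (hlam : 0 < lam)
    (η : (c : C) → U c → S c → ℝ)
    (use : (c : C) → U c → S c → Finset R)
    (w : R → ℝ → ℝ) (hmono : ∀ r, Antitone (w r))
    (μ μ' : (c : C) → S c → U c → ℝ)
    (hX : MemX m μ) (hN : IsMSNE (fun c ν u => Fcong lam use η w ν c u) η μ)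
    (hX' : MemX m μ') (hN' : IsMSNE (fun c ν u => Fcong lam use η w ν c u) η μ')
    (r : R) :
    (w r (sigmaMu lam use μ' r) - w r (sigmaMu lam use μ r))
      * (sigmaMu lam use μ r - sigmaMu lam use μ' r) = 0 := by
  set F := fun (ν : (c : C) → S c → U c → ℝ) (c : C) (u : U c) => Fcong lam use η w ν c u with hF
  have h1 : ∑ c, ∑ u, (∑ s, μ' c s u) * F μ c u ≤ ∑ c, ∑ u, (∑ s, μ c s u) * F μ c u :=
    Finset.sum_le_sum fun c _ =>
      var_ineq m (fun c ν u => Fcong lam use η w ν c u) η μ μ' hX hN hX' c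
  have h2 : ∑ c, ∑ u, (∑ s, μ c s u) * F μ' c u ≤ ∑ c, ∑ u, (∑ s, μ' c s u) * F μ' c u :=
    Finset.sum_le_sum fun c _ =>
      var_ineq m (fun c ν u => Fcong lam use η w ν c u) η μ' μ hX' hN' hX c
  have hT : ∑ c, ∑ u, ((∑ s, μ c s u) - (∑ s, μ' c s u)) * (F μ' c u - F μ c u) ≤ 0 := by
    have expand : ∑ c, ∑ u, ((∑ s, μ c s u) - (∑ s, μ' c s u)) * (F μ' c u - F μ c u)
        = (∑ c, ∑ u, (∑ s, μ c s u) * F μ' c u) - (∑ c, ∑ u, (∑ s, μ c s u) * F μ c u)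
          - (∑ c, ∑ u, (∑ s, μ' c s u) * F μ' c u) + (∑ c, ∑ u, (∑ s, μ' c s u) * F μ c u) := by
      simp only [← Finset.sum_sub_distrib, ← Finset.sum_add_distrib]
      exact Finset.sum_congr rfl fun c _ => Finset.sum_congr rfl fun u _ => by
        rw [Finset.sum_sub_distrib]; ring
    rw [expand]; linarith
  have hFd : ∀ (c : C) (u : U c), F μ' c u - F μ c u
      = ∑ r, Acoef η use c u r * (w r (sigmaMu lam use μ' r) - w r (sigmaMu lam use μ r)) := by
    intro c u
    rw [hF]
    simp only
    rw [F_eq, F_eq, ← Finset.sum_sub_distrib]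
    exact Finset.sum_congr rfl fun r _ => (mul_sub _ _ _).symm
  have hσd : ∀ r : R, sigmaMu lam use μ r - sigmaMu lam use μ' r
      = lam * ∑ c, ∑ u, Acoef η use c u r * ((∑ s, μ c s u) - (∑ s, μ' c s u)) := by
    intro r
    rw [sigma_eq lam use η μ (fun c u s => (hN c u).2 s) r,
        sigma_eq lam use η μ' (fun c u s => (hN' c u).2 s) r,
        ← mul_sub]
    congr 1
    rw [← Finset.sum_sub_distrib]
    refine Finset.sum_congr rfl fun c _ => ?_
    rw [← Finset.sum_sub_distrib]
    exact Finset.sum_congr rfl fun u _ => (mul_sub _ _ _).symm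
  have hsum : ∑ r : R, (w r (sigmaMu lam use μ' r) - w r (sigmaMu lam use μ r))
      * (sigmaMu lam use μ r - sigmaMu lam use μ' r)
      = lam * ∑ c, ∑ u, ((∑ s, μ c s u) - (∑ s, μ' c s u)) * (F μ' c u - F μ c u) := by
    calc ∑ r : R, (w r (sigmaMu lam use μ' r) - w r (sigmaMu lam use μ r))
            * (sigmaMu lam use μ r - sigmaMu lam use μ' r)
        = ∑ r : R, ∑ c, ∑ u, lam * ((w r (sigmaMu lam use μ' r) - w r (sigmaMu lam use μ r))
            * (Acoef η use c u r * ((∑ s, μ c s u) - (∑ s, μ' c s u)))) := by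
          refine Finset.sum_congr rfl fun r _ => ?_
          rw [hσd r]
          simp only [Finset.mul_sum]
          exact Finset.sum_congr rfl fun c _ => Finset.sum_congr rfl fun u _ => by ring
      _ = ∑ c, ∑ u, ∑ r : R, lam * ((w r (sigmaMu lam use μ' r) - w r (sigmaMu lam use μ r))
            * (Acoef η use c u r * ((∑ s, μ c s u) - (∑ s, μ' c s u)))) := by
          rw [Finset.sum_comm]
          exact Finset.sum_congr rfl fun c _ => Finset.sum_comm
      _ = lam * ∑ c, ∑ u, ((∑ s, μ c s u) - (∑ s, μ' c s u)) * (F μ' c u - F μ c u) := by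
          simp only [Finset.mul_sum]
          refine Finset.sum_congr rfl fun c _ => Finset.sum_congr rfl fun u _ => ?_
          rw [hFd c u]
          simp only [Finset.mul_sum]
          exact Finset.sum_congr rfl fun r _ => by ring
  have hnn : ∀ r ∈ (univ : Finset R),
      0 ≤ (w r (sigmaMu lam use μ' r) - w r (sigmaMu lam use μ r))
        * (sigmaMu lam use μ r - sigmaMu lam use μ' r) := by
    intro r _
    rcases le_total (sigmaMu lam use μ r) (sigmaMu lam use μ' r) with h | h
    · nlinarith [hmono r h]
    · nlinarith [hmono r h]
  have hzero : ∑ r : R, (w r (sigmaMu lam use μ' r) - w r (sigmaMu lam use μ r))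
      * (sigmaMu lam use μ r - sigmaMu lam use μ' r) = 0 := by
    refine le_antisymm ?_ (Finset.sum_nonneg hnn)
    rw [hsum]
    exact mul_nonpos_iff.2 (Or.inl ⟨hlam.le, hT⟩)
  exact (Finset.sum_eq_zero_iff_of_nonneg hnn).1 hzero r (mem_univ r)

lemma w_eq_of_msne [Fintype C] [∀ c, Fintype (S c)] [∀ c, Fintype (U c)] [∀ c, Nonempty (U c)]
    [Fintype R] [DecidableEq R]
    (m : C → ℝ) (lam : ℝ) (hlam : 0 < lam)
    (η : (c : C) → U c → S c → ℝ)
    (use : (c : C) → U c → S c → Finset R)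
    (w : R → ℝ → ℝ) (hmono : ∀ r, Antitone (w r))
    (μ μ' : (c : C) → S c → U c → ℝ)
    (hX : MemX m μ) (hN : IsMSNE (fun c ν u => Fcong lam use η w ν c u) η μ)
    (hX' : MemX m μ') (hN' : IsMSNE (fun c ν u => Fcong lam use η w ν c u) η μ')
    (r : R) : w r (sigmaMu lam use μ r) = w r (sigmaMu lam use μ' r) := by
  have h := key_zero m lam hlam η use w hmono μ μ' hX hN hX' hN' r
  rcases mul_eq_zero.1 h with h | h
  · exact (sub_eq_zero.1 h).symm
  · rw [sub_eq_zero.1 h]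

lemma sigma_eq_of_msne [Fintype C] [∀ c, Fintype (S c)] [∀ c, Fintype (U c)] [∀ c, Nonempty (U c)]
    [Fintype R] [DecidableEq R]
    (m : C → ℝ) (lam : ℝ) (hlam : 0 < lam)
    (η : (c : C) → U c → S c → ℝ)
    (use : (c : C) → U c → S c → Finset R)
    (w : R → ℝ → ℝ) (hs : ∀ r, StrictAnti (w r))
    (μ μ' : (c : C) → S c → U c → ℝ)
    (hX : MemX m μ) (hN : IsMSNE (fun c ν u => Fcong lam use η w ν c u) η μ)
    (hX' : MemX m μ') (hN' : IsMSNE (fun c ν u => Fcong lam use η w ν c u) η μ')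
    (r : R) : sigmaMu lam use μ r = sigmaMu lam use μ' r := by
  have h := key_zero m lam hlam η use w (fun r => (hs r).antitone) μ μ' hX hN hX' hN' r
  by_contra hne
  rcases lt_or_gt_of_ne hne with hlt | hlt
  · have := hs r hlt; nlinarith
  · have := hs r hlt; nlinarith

lemma msne_convex [Fintype C] [∀ c, Fintype (S c)] [∀ c, Fintype (U c)] [∀ c, Nonempty (U c)]
    [Fintype R] [DecidableEq R]
    (m : C → ℝ) (lam : ℝ) (hlam : 0 < lam)
    (η : (c : C) → U c → S c → ℝ)
    (use : (c : C) → U c → S c → Finset R)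
    (w : R → ℝ → ℝ) (hmono : ∀ r, Antitone (w r))
    (μ μ' : (c : C) → S c → U c → ℝ)
    (hX : MemX m μ) (hN : IsMSNE (fun c ν u => Fcong lam use η w ν c u) η μ)
    (hX' : MemX m μ') (hN' : IsMSNE (fun c ν u => Fcong lam use η w ν c u) η μ')
    (t t' : ℝ) (ht : 0 ≤ t) (ht' : 0 ≤ t') (htt : t + t' = 1) :
    MemX m (fun c s u => t * μ c s u + t' * μ' c s u) ∧
      IsMSNE (fun c ν u => Fcong lam use η w ν c u) η
        (fun c s u => t * μ c s u + t' * μ' c s u) := by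
  set ν : (c : C) → S c → U c → ℝ := fun c s u => t * μ c s u + t' * μ' c s u with hν
  have hsum : ∀ (c : C) (u : U c), ∑ s, ν c s u = t * (∑ s, μ c s u) + t' * (∑ s, μ' c s u) := by
    intro c u
    rw [hν]
    simp only [Finset.sum_add_distrib, Finset.mul_sum]
  have hMemX : MemX m ν := by
    intro c
    refine ⟨fun s u => add_nonneg (mul_nonneg ht ((hX c).1 s u)) (mul_nonneg ht' ((hX' c).1 s u)), ?_⟩
    have : ∑ s, ∑ u, ν c s u = t * (∑ s, ∑ u, μ c s u) + t' * (∑ s, ∑ u, μ' c s u) := by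
      simp only [hν, Finset.sum_add_distrib, Finset.mul_sum]
    rw [this, (hX c).2, (hX' c).2, ← add_mul, htt, one_mul]
  have hweq := w_eq_of_msne m lam hlam η use w hmono μ μ' hX hN hX' hN'
  have hσν : ∀ r, sigmaMu lam use ν r = t * sigmaMu lam use μ r + t' * sigmaMu lam use μ' r :=
    fun r => sigma_lin lam use μ μ' t t' r
  have hwν : ∀ r, w r (sigmaMu lam use ν r) = w r (sigmaMu lam use μ r) := by
    intro r
    set a := sigmaMu lam use μ r
    set b := sigmaMu lam use μ' r
    have ht1 : t' = 1 - t := by linarith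
    rcases le_total a b with h | h
    · have h1 : a ≤ t * a + t' * b := by
        rw [ht1]; linarith [mul_nonneg (by linarith : (0:ℝ) ≤ 1 - t) (sub_nonneg.2 h)]
      have h2 : t * a + t' * b ≤ b := by
        rw [ht1]; linarith [mul_nonneg ht (sub_nonneg.2 h)]
      have l1 := hmono r h1
      have l2 := hmono r h2
      rw [hσν r]
      have := hweq r
      linarith
    · have h1 : b ≤ t * a + t' * b := by
        rw [ht1]; linarith [mul_nonneg ht (sub_nonneg.2 h)]
      have h2 : t * a + t' * b ≤ a := by
        rw [ht1]; linarith [mul_nonneg (by linarith : (0:ℝ) ≤ 1 - t) (sub_nonneg.2 h)]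
      have l1 := hmono r h1
      have l2 := hmono r h2
      rw [hσν r]
      have := hweq r
      linarith
  have hFν : ∀ (c : C) (u : U c), Fcong lam use η w ν c u = Fcong lam use η w μ c u := by
    intro c u
    rw [F_eq, F_eq]
    exact Finset.sum_congr rfl fun r _ => by rw [hwν r]
  have hFν' : ∀ (c : C) (u : U c), Fcong lam use η w ν c u = Fcong lam use η w μ' c u := by
    intro c u
    rw [hFν c u, F_eq, F_eq]
    exact Finset.sum_congr rfl fun r _ => by rw [hweq r]
  refine ⟨hMemX, fun c u => ⟨?_, ?_⟩⟩
  · intro hpos v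
    rw [hsum c u] at hpos
    have hx0 : 0 ≤ ∑ s, μ c s u := Finset.sum_nonneg fun s _ => (hX c).1 s u
    have hx0' : 0 ≤ ∑ s, μ' c s u := Finset.sum_nonneg fun s _ => (hX' c).1 s u
    have : 0 < t * (∑ s, μ c s u) ∨ 0 < t' * (∑ s, μ' c s u) := by
      by_contra h
      push_neg at h
      linarith [h.1, h.2]
    rcases this with h | h
    · have hpos' : 0 < ∑ s, μ c s u := by
        rcases hx0.eq_or_lt with he | he
        · rw [← he, mul_zero] at h; exact absurd h (lt_irrefl 0)
        · exact he
      have := (hN c u).1 hpos' v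
      simpa only [hFν] using this
    · have hpos' : 0 < ∑ s, μ' c s u := by
        rcases hx0'.eq_or_lt with he | he
        · rw [← he, mul_zero] at h; exact absurd h (lt_irrefl 0)
        · exact he
      have := (hN' c u).1 hpos' v
      simp only [hFν'] at *
      exact this
  · intro s
    have e1 := (hN c u).2 s
    have e2 := (hN' c u).2 s
    rw [hsum c u]
    show t * μ c s u + t' * μ' c s u = _
    rw [e1, e2]
    ring

lemma msne_compact [Fintype C] [∀ c, Fintype (S c)] [∀ c, Fintype (U c)]
    [Fintype R] [DecidableEq R]
    (m : C → ℝ) (lam : ℝ)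
    (η : (c : C) → U c → S c → ℝ)
    (use : (c : C) → U c → S c → Finset R)
    (w : R → ℝ → ℝ) (hw : ∀ r, Continuous (w r)) :
    IsCompact {μ : (c : C) → S c → U c → ℝ |
        MemX m μ ∧ IsMSNE (fun c μ' u => Fcong lam use η w μ' c u) η μ} := by
  have hev : ∀ (c : C) (s : S c) (u : U c),
      Continuous fun μ : (c : C) → S c → U c → ℝ => μ c s u := fun c s u =>
    (continuous_apply u).comp ((continuous_apply s).comp (continuous_apply c))
  have hsumcont : ∀ (c : C) (u : U c),
      Continuous fun μ : (c : C) → S c → U c → ℝ => ∑ s, μ c s u := fun c u =>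
    continuous_finset_sum _ fun s _ => hev c s u
  have hbox : IsCompact (Set.pi Set.univ fun c : C =>
      Set.pi Set.univ fun s : S c => Set.pi Set.univ fun _ : U c => Set.Icc (0:ℝ) (m c)) :=
    isCompact_univ_pi fun c => isCompact_univ_pi fun s => isCompact_univ_pi fun u =>
      isCompact_Icc
  refine IsCompact.of_isClosed_subset hbox ?_ ?_
  · -- closedness
    have : {μ : (c : C) → S c → U c → ℝ |
        MemX m μ ∧ IsMSNE (fun c μ' u => Fcong lam use η w μ' c u) η μ}
        = (⋂ c, ((⋂ s, ⋂ u, {μ : (c : C) → S c → U c → ℝ | 0 ≤ μ c s u}) ∩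
            {μ | ∑ s, ∑ u, μ c s u = m c})) ∩
          (⋂ c, ⋂ u, (({μ : (c : C) → S c → U c → ℝ | ∑ s, μ c s u ≤ 0} ∪
              ⋂ v, {μ | Fcong lam use η w μ c v ≤ Fcong lam use η w μ c u}) ∩
            ⋂ s, {μ | μ c s u = η c u s * ∑ s', μ c s' u})) := by
      ext μ
      simp only [Set.mem_setOf_eq, Set.mem_inter_iff, Set.mem_iInter, Set.mem_union, MemX, IsMSNE]
      constructor
      · rintro ⟨h1, h2⟩
        refine ⟨fun c => ⟨fun s u => (h1 c).1 s u, (h1 c).2⟩, fun c u => ⟨?_, (h2 c u).2⟩⟩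
        rcases le_or_gt (∑ s, μ c s u) 0 with h | h
        · exact Or.inl h
        · exact Or.inr fun v => (h2 c u).1 h v
      · rintro ⟨h1, h2⟩
        refine ⟨fun c => ⟨fun s u => (h1 c).1 s u, (h1 c).2⟩, fun c u => ⟨?_, (h2 c u).2⟩⟩
        intro hpos v
        rcases (h2 c u).1 with h | h
        · linarith
        · exact h v
    rw [this]
    refine IsClosed.inter (isClosed_iInter fun c => IsClosed.inter
        (isClosed_iInter fun s => isClosed_iInter fun u =>
          isClosed_le continuous_const (hev c s u))
        (isClosed_eq (continuous_finset_sum _ fun s _ =>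
          continuous_finset_sum _ fun u _ => hev c s u) continuous_const))
      (isClosed_iInter fun c => isClosed_iInter fun u => IsClosed.inter
        (IsClosed.union (isClosed_le (hsumcont c u) continuous_const)
          (isClosed_iInter fun v => isClosed_le
            (F_cont lam use η w hw c v) (F_cont lam use η w hw c u)))
        (isClosed_iInter fun s => isClosed_eq (hev c s u)
          (continuous_const.mul (hsumcont c u))))
  · -- subset of the box
    rintro μ ⟨h1, -⟩
    intro c _ 
    intro s _ u _
    refine ⟨(h1 c).1 s u, ?_⟩
    calc μ c s u ≤ ∑ u', μ c s u' :=
          Finset.single_le_sum (fun u' _ => (h1 c).1 s u') (mem_univ u)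
      _ ≤ ∑ s', ∑ u', μ c s' u' :=
          Finset.single_le_sum (fun s' _ => Finset.sum_nonneg fun u' _ => (h1 c).1 s' u')
            (mem_univ s)
      _ = m c := (h1 c).2

/-- Under the congestion game payoff structure with nonincreasing resource
rewards, the set of MSNE is compact and convex; if moreover the rewards are strictly
decreasing, then any two MSNE induce the same flow on every resource. -/
theorem stmt10 [Fintype C] [Nonempty C]
    [∀ c, Fintype (S c)] [∀ c, Nonempty (S c)]
    [∀ c, Fintype (U c)] [∀ c, Nonempty (U c)]
    [Fintype R] [DecidableEq R]
    (m : C → ℝ) (hm : ∀ c, 0 < m c) (lam : ℝ) (hlam : 0 < lam)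
    (η : (c : C) → U c → S c → ℝ)
    (hη0 : ∀ c (u : U c) s, 0 ≤ η c u s) (hη1 : ∀ c (u : U c), ∑ s, η c u s = 1)
    (use : (c : C) → U c → S c → Finset R)
    (w : R → ℝ → ℝ) (hw : ∀ r, Continuous (w r)) (hmono : ∀ r, Antitone (w r)) :
    (IsCompact {μ : (c : C) → S c → U c → ℝ |
        MemX m μ ∧ IsMSNE (fun c μ' u => Fcong lam use η w μ' c u) η μ} ∧
      Convex ℝ {μ : (c : C) → S c → U c → ℝ |
        MemX m μ ∧ IsMSNE (fun c μ' u => Fcong lam use η w μ' c u) η μ}) ∧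
    ((∀ r, StrictAnti (w r)) →
      ∀ μ μ' : (c : C) → S c → U c → ℝ,
        MemX m μ → IsMSNE (fun c ν u => Fcong lam use η w ν c u) η μ →
        MemX m μ' → IsMSNE (fun c ν u => Fcong lam use η w ν c u) η μ' →
        ∀ r, sigmaMu lam use μ r = sigmaMu lam use μ' r) := by
  refine ⟨⟨msne_compact m lam η use w hw, ?_⟩, fun hs μ μ' hX hN hX' hN' r =>
    sigma_eq_of_msne m lam hlam η use w hs μ μ' hX hN hX' hN' r⟩
  rintro μ ⟨hX, hN⟩ μ' ⟨hX', hN'⟩ t t' ht ht' htt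
  have hrepr : t • μ + t' • μ' = fun c s u => t * μ c s u + t' * μ' c s u := rfl
  have h := msne_convex m lam hlam η use w hmono μ μ' hX hN hX' hN' t t' ht ht' htt
  rw [Set.mem_setOf_eq, hrepr]
  exact h
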